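/- For every H ∈ (1/2, 1), the quantity ρ̂(H) := (1/4)·(9^{2H} − 8^{2H} − 2·6^{2H} + 4·4^{2H} − 2·2^{2H} − 1) is strictly positive; moreover ρ̂(H) = ρ_2(H) + ρ_2(H)² − ρ_1(H)² − ρ_1(H)·ρ_3(H), and ρ̂(1/2) = ρ̂(1) = 0. -/

import Mathlib

open Real Set

/-- Autocovariance function of fractional Gaussian noise with Hurst parameter `H`:
`ρ_k(H) = ((k+1)^{2H} − 2·k^{2H} + (k−1)^{2H})/2` for `k ≥ 1`, and `ρ_0(H) = 1`. -/
noncomputable def rho (H : ℝ) (k : ℕ) : ℝ :=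
  if k = 0 then 1
  else (((k : ℝ) + 1) ^ (2 * H) - 2 * (k : ℝ) ^ (2 * H) + ((k : ℝ) - 1) ^ (2 * H)) / 2

/-- `ρ̂(H) = (1/4)(9^{2H} − 8^{2H} − 2·6^{2H} + 4·4^{2H} − 2·2^{2H} − 1)`. -/
noncomputable def rhoHat (H : ℝ) : ℝ :=
  (1 / 4) * ((9 : ℝ) ^ (2 * H) - (8 : ℝ) ^ (2 * H) - 2 * (6 : ℝ) ^ (2 * H)
    + 4 * (4 : ℝ) ^ (2 * H) - 2 * (2 : ℝ) ^ (2 * H) - 1)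

/-! ### Auxiliary machinery -/

noncomputable def fE (t : ℝ) : ℝ :=
  (9:ℝ)^t - (8:ℝ)^t - 2*(6:ℝ)^t + 4*(4:ℝ)^t - 2*(2:ℝ)^t - 1

noncomputable def F0 (t : ℝ) : ℝ :=
  (3:ℝ)^t - ((8:ℝ)/3)^t - 2*(2:ℝ)^t + 4*((4:ℝ)/3)^t - 2*((2:ℝ)/3)^t - ((1:ℝ)/3)^t

noncomputable def G1 (t : ℝ) : ℝ :=
  Real.log 3 * (3:ℝ)^t - Real.log (8/3) * ((8:ℝ)/3)^t - 2*Real.log 2 * (2:ℝ)^t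
  + 4*Real.log (4/3) * ((4:ℝ)/3)^t - 2*Real.log (2/3) * ((2:ℝ)/3)^t
  - Real.log (1/3) * ((1:ℝ)/3)^t

noncomputable def F1 (t : ℝ) : ℝ :=
  Real.log 3 * (2:ℝ)^t - Real.log (8/3) * ((16:ℝ)/9)^t - 2*Real.log 2 * ((4:ℝ)/3)^t
  + 4*Real.log (4/3) * ((8:ℝ)/9)^t - 2*Real.log (2/3) * ((4:ℝ)/9)^t
  - Real.log (1/3) * ((2:ℝ)/9)^t

noncomputable def G2 (t : ℝ) : ℝ :=
  Real.log 3 * Real.log 2 * (2:ℝ)^t - Real.log (8/3) * Real.log (16/9) * ((16:ℝ)/9)^t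
  - 2*Real.log 2 * Real.log (4/3) * ((4:ℝ)/3)^t
  + 4*Real.log (4/3) * Real.log (8/9) * ((8:ℝ)/9)^t
  - 2*Real.log (2/3) * Real.log (4/9) * ((4:ℝ)/9)^t
  - Real.log (1/3) * Real.log (2/9) * ((2:ℝ)/9)^t

noncomputable def F2 (t : ℝ) : ℝ :=
  Real.log 3 * Real.log 2 * ((16:ℝ)/15)^t
  - Real.log (8/3) * Real.log (16/9) * ((128:ℝ)/135)^t
  - 2*Real.log 2 * Real.log (4/3) * ((32:ℝ)/45)^t
  + 4*Real.log (4/3) * Real.log (8/9) * ((64:ℝ)/135)^t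
  - 2*Real.log (2/3) * Real.log (4/9) * ((32:ℝ)/135)^t
  - Real.log (1/3) * Real.log (2/9) * ((16:ℝ)/135)^t

noncomputable def D2 (t : ℝ) : ℝ :=
  Real.log 3 * Real.log 2 * Real.log (16/15) * ((16:ℝ)/15)^t
  - Real.log (8/3) * Real.log (16/9) * Real.log (128/135) * ((128:ℝ)/135)^t
  - 2*Real.log 2 * Real.log (4/3) * Real.log (32/45) * ((32:ℝ)/45)^t
  + 4*Real.log (4/3) * Real.log (8/9) * Real.log (64/135) * ((64:ℝ)/135)^t
  - 2*Real.log (2/3) * Real.log (4/9) * Real.log (32/135) * ((32:ℝ)/135)^t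
  - Real.log (1/3) * Real.log (2/9) * Real.log (16/135) * ((16:ℝ)/135)^t

lemma hasDerivAt_base (b : ℝ) (hb : 0 < b) (x : ℝ) :
    HasDerivAt (fun x => b ^ x) (b ^ x * Real.log b) x :=
  (Real.hasStrictDerivAt_const_rpow hb x).hasDerivAt

lemma hasDerivAt_F0 (t : ℝ) : HasDerivAt F0 (G1 t) t := by
  have h3 := hasDerivAt_base 3 (by norm_num) t
  have h83 := hasDerivAt_base (8/3) (by norm_num) t
  have h2 := hasDerivAt_base 2 (by norm_num) t
  have h43 := hasDerivAt_base (4/3) (by norm_num) t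
  have h23 := hasDerivAt_base (2/3) (by norm_num) t
  have h13 := hasDerivAt_base (1/3) (by norm_num) t
  have H := ((((h3.sub h83).sub (h2.const_mul 2)).add (h43.const_mul 4)).sub
      (h23.const_mul 2)).sub h13
  convert H using 1
  case e'_9 => unfold G1; ring
  all_goals rfl

lemma hasDerivAt_F1 (t : ℝ) : HasDerivAt F1 (G2 t) t := by
  have h2 := hasDerivAt_base 2 (by norm_num) t
  have h169 := hasDerivAt_base (16/9) (by norm_num) t
  have h43 := hasDerivAt_base (4/3) (by norm_num) t
  have h89 := hasDerivAt_base (8/9) (by norm_num) t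
  have h49 := hasDerivAt_base (4/9) (by norm_num) t
  have h29 := hasDerivAt_base (2/9) (by norm_num) t
  have H := (((((h2.const_mul (Real.log 3)).sub (h169.const_mul (Real.log (8/3)))).sub
      (h43.const_mul (2*Real.log 2))).add (h89.const_mul (4*Real.log (4/3)))).sub
      (h49.const_mul (2*Real.log (2/3)))).sub (h29.const_mul (Real.log (1/3)))
  convert H using 1
  case e'_9 => unfold G2; ring
  all_goals rfl

lemma hasDerivAt_F2 (t : ℝ) : HasDerivAt F2 (D2 t) t := by
  have h1 := hasDerivAt_base (16/15) (by norm_num) t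
  have h2 := hasDerivAt_base (128/135) (by norm_num) t
  have h3 := hasDerivAt_base (32/45) (by norm_num) t
  have h4 := hasDerivAt_base (64/135) (by norm_num) t
  have h5 := hasDerivAt_base (32/135) (by norm_num) t
  have h6 := hasDerivAt_base (16/135) (by norm_num) t
  have H := (((((h1.const_mul (Real.log 3 * Real.log 2)).sub
      (h2.const_mul (Real.log (8/3) * Real.log (16/9)))).sub
      (h3.const_mul (2*Real.log 2 * Real.log (4/3)))).add
      (h4.const_mul (4*Real.log (4/3) * Real.log (8/9)))).sub
      (h5.const_mul (2*Real.log (2/3) * Real.log (4/9)))).sub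
      (h6.const_mul (Real.log (1/3) * Real.log (2/9)))
  convert H using 1
  case e'_9 => unfold D2; ring
  all_goals rfl

lemma F0_eq (x : ℝ) : F0 x = fE x * ((1:ℝ)/3)^x := by
  have m : ∀ a c : ℝ, 0 ≤ a → a * (1/3) = c → (c:ℝ)^x = a^x * ((1:ℝ)/3)^x := by
    intro a c ha hc
    rw [← Real.mul_rpow ha (by norm_num), hc]
  have h9 := m 9 3 (by norm_num) (by norm_num)
  have h8 := m 8 (8/3) (by norm_num) (by norm_num)
  have h6 := m 6 2 (by norm_num) (by norm_num)
  have h4 := m 4 (4/3) (by norm_num) (by norm_num)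
  have h2 := m 2 (2/3) (by norm_num) (by norm_num)
  have h1 := m 1 (1/3) (by norm_num) (by norm_num)
  rw [Real.one_rpow] at h1
  unfold F0 fE
  linear_combination h9 - h8 - 2*h6 + 4*h4 - 2*h2 - h1

lemma F1_eq (x : ℝ) : F1 x = G1 x * ((2:ℝ)/3)^x := by
  have m : ∀ a c : ℝ, 0 ≤ a → a * (2/3) = c → (c:ℝ)^x = a^x * ((2:ℝ)/3)^x := by
    intro a c ha hc
    rw [← Real.mul_rpow ha (by norm_num), hc]
  have h3 := m 3 2 (by norm_num) (by norm_num)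
  have h83 := m (8/3) (16/9) (by norm_num) (by norm_num)
  have h2 := m 2 (4/3) (by norm_num) (by norm_num)
  have h43 := m (4/3) (8/9) (by norm_num) (by norm_num)
  have h23 := m (2/3) (4/9) (by norm_num) (by norm_num)
  have h13 := m (1/3) (2/9) (by norm_num) (by norm_num)
  unfold F1 G1
  linear_combination (Real.log 3) * h3 - (Real.log (8/3)) * h83 - (2*Real.log 2) * h2
    + (4*Real.log (4/3)) * h43 - (2*Real.log (2/3)) * h23 - (Real.log (1/3)) * h13

lemma F2_eq (x : ℝ) : F2 x = G2 x * ((8:ℝ)/15)^x := by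
  have m : ∀ a c : ℝ, 0 ≤ a → a * (8/15) = c → (c:ℝ)^x = a^x * ((8:ℝ)/15)^x := by
    intro a c ha hc
    rw [← Real.mul_rpow ha (by norm_num), hc]
  have h2 := m 2 (16/15) (by norm_num) (by norm_num)
  have h169 := m (16/9) (128/135) (by norm_num) (by norm_num)
  have h43 := m (4/3) (32/45) (by norm_num) (by norm_num)
  have h89 := m (8/9) (64/135) (by norm_num) (by norm_num)
  have h49 := m (4/9) (32/135) (by norm_num) (by norm_num)
  have h29 := m (2/9) (16/135) (by norm_num) (by norm_num)
  unfold F2 G2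
  linear_combination (Real.log 3 * Real.log 2) * h2
    - (Real.log (8/3) * Real.log (16/9)) * h169
    - (2*Real.log 2 * Real.log (4/3)) * h43
    + (4*Real.log (4/3) * Real.log (8/9)) * h89
    - (2*Real.log (2/3) * Real.log (4/9)) * h49
    - (Real.log (1/3) * Real.log (2/9)) * h29

lemma D2_pos (t : ℝ) : 0 < D2 t := by
  have l3 : 0 < Real.log 3 := Real.log_pos (by norm_num)
  have l2 : 0 < Real.log 2 := Real.log_pos (by norm_num)
  have l83 : 0 < Real.log (8/3) := Real.log_pos (by norm_num)
  have l169 : 0 < Real.log (16/9) := Real.log_pos (by norm_num)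
  have l43 : 0 < Real.log (4/3) := Real.log_pos (by norm_num)
  have l1615 : 0 < Real.log (16/15) := Real.log_pos (by norm_num)
  have n128 : Real.log (128/135) < 0 := Real.log_neg (by norm_num) (by norm_num)
  have n3245 : Real.log (32/45) < 0 := Real.log_neg (by norm_num) (by norm_num)
  have n89 : Real.log (8/9) < 0 := Real.log_neg (by norm_num) (by norm_num)
  have n64 : Real.log (64/135) < 0 := Real.log_neg (by norm_num) (by norm_num)
  have n23 : Real.log (2/3) < 0 := Real.log_neg (by norm_num) (by norm_num)
  have n49 : Real.log (4/9) < 0 := Real.log_neg (by norm_num) (by norm_num)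
  have n32135 : Real.log (32/135) < 0 := Real.log_neg (by norm_num) (by norm_num)
  have n13 : Real.log (1/3) < 0 := Real.log_neg (by norm_num) (by norm_num)
  have n29 : Real.log (2/9) < 0 := Real.log_neg (by norm_num) (by norm_num)
  have n16135 : Real.log (16/135) < 0 := Real.log_neg (by norm_num) (by norm_num)
  have p1 : (0:ℝ) < ((16:ℝ)/15)^t := Real.rpow_pos_of_pos (by norm_num) t
  have p2 : (0:ℝ) < ((128:ℝ)/135)^t := Real.rpow_pos_of_pos (by norm_num) t
  have p3 : (0:ℝ) < ((32:ℝ)/45)^t := Real.rpow_pos_of_pos (by norm_num) t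
  have p4 : (0:ℝ) < ((64:ℝ)/135)^t := Real.rpow_pos_of_pos (by norm_num) t
  have p5 : (0:ℝ) < ((32:ℝ)/135)^t := Real.rpow_pos_of_pos (by norm_num) t
  have p6 : (0:ℝ) < ((16:ℝ)/135)^t := Real.rpow_pos_of_pos (by norm_num) t
  have t1 : 0 < Real.log 3 * Real.log 2 * Real.log (16/15) * ((16:ℝ)/15)^t :=
    mul_pos (mul_pos (mul_pos l3 l2) l1615) p1
  have t2 : Real.log (8/3) * Real.log (16/9) * Real.log (128/135) * ((128:ℝ)/135)^t < 0 :=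
    mul_neg_of_neg_of_pos (mul_neg_of_pos_of_neg (mul_pos l83 l169) n128) p2
  have t3 : Real.log 2 * Real.log (4/3) * Real.log (32/45) * ((32:ℝ)/45)^t < 0 :=
    mul_neg_of_neg_of_pos (mul_neg_of_pos_of_neg (mul_pos l2 l43) n3245) p3
  have t4 : 0 < Real.log (4/3) * Real.log (8/9) * Real.log (64/135) * ((64:ℝ)/135)^t :=
    mul_pos (mul_pos_of_neg_of_neg (mul_neg_of_pos_of_neg l43 n89) n64) p4
  have t5 : Real.log (2/3) * Real.log (4/9) * Real.log (32/135) * ((32:ℝ)/135)^t < 0 :=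
    mul_neg_of_neg_of_pos (mul_neg_of_pos_of_neg (mul_pos_of_neg_of_neg n23 n49) n32135) p5
  have t6 : Real.log (1/3) * Real.log (2/9) * Real.log (16/135) * ((16:ℝ)/135)^t < 0 :=
    mul_neg_of_neg_of_pos (mul_neg_of_pos_of_neg (mul_pos_of_neg_of_neg n13 n29) n16135) p6
  unfold D2
  nlinarith [t1, t2, t3, t4, t5, t6]

lemma F2_strictMono : StrictMono F2 :=
  strictMono_of_deriv_pos fun x => by
    rw [(hasDerivAt_F2 x).deriv]; exact D2_pos x

lemma rpow_div_lt {a b r : ℝ} (p q : ℕ) (hr : r = (p:ℝ)/(q:ℝ)) (ha : 0 ≤ a) (hb : 0 ≤ b)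
    (hq : 0 < q) (h : a ^ p < b ^ q) : a ^ r < b := by
  have hq' : (0:ℝ) < (q:ℝ) := by exact_mod_cast hq
  have h1 : a ^ r = ((a ^ p : ℝ)) ^ ((q:ℝ)⁻¹) := by
    rw [← Real.rpow_natCast a p, ← Real.rpow_mul ha, hr]
    ring_nf
  have h2 : b = ((b ^ q : ℝ)) ^ ((q:ℝ)⁻¹) := by
    rw [← Real.rpow_natCast b q, ← Real.rpow_mul hb, mul_inv_cancel₀ (ne_of_gt hq'),
      Real.rpow_one]
  rw [h1, h2]
  exact Real.rpow_lt_rpow (by positivity) h (by positivity)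

lemma lt_rpow_div {a b r : ℝ} (p q : ℕ) (hr : r = (p:ℝ)/(q:ℝ)) (ha : 0 ≤ a) (hb : 0 ≤ b)
    (hq : 0 < q) (h : b ^ q < a ^ p) : b < a ^ r := by
  have hq' : (0:ℝ) < (q:ℝ) := by exact_mod_cast hq
  have h1 : a ^ r = ((a ^ p : ℝ)) ^ ((q:ℝ)⁻¹) := by
    rw [← Real.rpow_natCast a p, ← Real.rpow_mul ha, hr]
    ring_nf
  have h2 : b = ((b ^ q : ℝ)) ^ ((q:ℝ)⁻¹) := by
    rw [← Real.rpow_natCast b q, ← Real.rpow_mul hb, mul_inv_cancel₀ (ne_of_gt hq'),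
      Real.rpow_one]
  rw [h1, h2]
  exact Real.rpow_lt_rpow (by positivity) h (by positivity)

lemma fE_one : fE 1 = 0 := by
  unfold fE
  simp [Real.rpow_one]
  norm_num

lemma rpow_two_eq (a : ℝ) : a ^ (2:ℝ) = a * a := by
  rw [show (2:ℝ) = ((2:ℕ):ℝ) by norm_num, Real.rpow_natCast]
  ring

lemma fE_two : fE 2 = 0 := by
  unfold fE
  rw [rpow_two_eq, rpow_two_eq, rpow_two_eq, rpow_two_eq, rpow_two_eq]
  norm_num

lemma fE_32_pos : 0 < fE (3/2) := by
  have h9 : (26.99:ℝ) < (9:ℝ) ^ ((3:ℝ)/2) :=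
    lt_rpow_div 3 2 (by norm_num) (by norm_num) (by norm_num) (by norm_num) (by norm_num)
  have h8 : (8:ℝ) ^ ((3:ℝ)/2) < 22.628 :=
    rpow_div_lt 3 2 (by norm_num) (by norm_num) (by norm_num) (by norm_num) (by norm_num)
  have h6 : (6:ℝ) ^ ((3:ℝ)/2) < 14.697 :=
    rpow_div_lt 3 2 (by norm_num) (by norm_num) (by norm_num) (by norm_num) (by norm_num)
  have h4 : (7.99:ℝ) < (4:ℝ) ^ ((3:ℝ)/2) :=
    lt_rpow_div 3 2 (by norm_num) (by norm_num) (by norm_num) (by norm_num) (by norm_num)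
  have h2 : (2:ℝ) ^ ((3:ℝ)/2) < 2.8285 :=
    rpow_div_lt 3 2 (by norm_num) (by norm_num) (by norm_num) (by norm_num) (by norm_num)
  unfold fE
  norm_num at *
  linarith

lemma fE_115_neg : fE (11/5) < 0 := by
  have h9 : (9:ℝ) ^ ((11:ℝ)/5) < 125.7 :=
    rpow_div_lt 11 5 (by norm_num) (by norm_num) (by norm_num) (by norm_num) (by norm_num)
  have h8 : (97.005:ℝ) < (8:ℝ) ^ ((11:ℝ)/5) :=
    lt_rpow_div 11 5 (by norm_num) (by norm_num) (by norm_num) (by norm_num) (by norm_num)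
  have h6 : (51.514:ℝ) < (6:ℝ) ^ ((11:ℝ)/5) :=
    lt_rpow_div 11 5 (by norm_num) (by norm_num) (by norm_num) (by norm_num) (by norm_num)
  have h4 : (4:ℝ) ^ ((11:ℝ)/5) < 21.1122 :=
    rpow_div_lt 11 5 (by norm_num) (by norm_num) (by norm_num) (by norm_num) (by norm_num)
  have h2 : (4.5947:ℝ) < (2:ℝ) ^ ((11:ℝ)/5) :=
    lt_rpow_div 11 5 (by norm_num) (by norm_num) (by norm_num) (by norm_num) (by norm_num)
  unfold fE
  norm_num at *
  linarith

lemma fE_125_pos : 0 < fE (12/5) := by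
  have h9 : (195.06:ℝ) < (9:ℝ) ^ ((12:ℝ)/5) :=
    lt_rpow_div 12 5 (by norm_num) (by norm_num) (by norm_num) (by norm_num) (by norm_num)
  have h8 : (8:ℝ) ^ ((12:ℝ)/5) < 147.04 :=
    rpow_div_lt 12 5 (by norm_num) (by norm_num) (by norm_num) (by norm_num) (by norm_num)
  have h6 : (6:ℝ) ^ ((12:ℝ)/5) < 73.72 :=
    rpow_div_lt 12 5 (by norm_num) (by norm_num) (by norm_num) (by norm_num) (by norm_num)
  have h4 : (27.857:ℝ) < (4:ℝ) ^ ((12:ℝ)/5) :=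
    lt_rpow_div 12 5 (by norm_num) (by norm_num) (by norm_num) (by norm_num) (by norm_num)
  have h2 : (2:ℝ) ^ ((12:ℝ)/5) < 5.279 :=
    rpow_div_lt 12 5 (by norm_num) (by norm_num) (by norm_num) (by norm_num) (by norm_num)
  unfold fE
  norm_num at *
  linarith

lemma fE_continuous : Continuous fE := by
  have cb : ∀ b:ℝ, 0 < b → Continuous (fun x:ℝ => b ^ x) := fun b hb =>
    continuous_const.rpow continuous_id fun x => Or.inl (ne_of_gt hb)
  unfold fE
  exact (((((cb 9 (by norm_num)).sub (cb 8 (by norm_num))).sub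
    (continuous_const.mul (cb 6 (by norm_num)))).add
    (continuous_const.mul (cb 4 (by norm_num)))).sub
    (continuous_const.mul (cb 2 (by norm_num)))).sub continuous_const

lemma fE_pos (t : ℝ) (ht : t ∈ Ioo (1:ℝ) 2) : 0 < fE t := by
  obtain ⟨h1t, ht2⟩ := ht
  by_contra hle
  push_neg at hle
  -- a zero of fE inside (1,2)
  have hz : ∃ z, 1 < z ∧ z < 2 ∧ fE z = 0 := by
    rcases eq_or_lt_of_le hle with heq | hlt
    · exact ⟨t, h1t, ht2, heq⟩
    · rcases lt_trichotomy t (3/2) with h | h | h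
      · obtain ⟨z, hzmem, hz0⟩ := intermediate_value_Ioo (le_of_lt h)
          fE_continuous.continuousOn ⟨hlt, fE_32_pos⟩
        exact ⟨z, lt_trans h1t hzmem.1, lt_trans hzmem.2 (by norm_num), hz0⟩
      · rw [h] at hlt; linarith [fE_32_pos]
      · obtain ⟨z, hzmem, hz0⟩ := intermediate_value_Ioo' (le_of_lt h)
          fE_continuous.continuousOn ⟨hlt, fE_32_pos⟩
        exact ⟨z, by linarith [hzmem.1], lt_trans hzmem.2 ht2, hz0⟩
  obtain ⟨z, hz1, hz2, hz0⟩ := hz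
  -- a zero of fE inside (11/5, 12/5)
  obtain ⟨w, hwmem, hw0⟩ := intermediate_value_Ioo (by norm_num : (11:ℝ)/5 ≤ 12/5)
    fE_continuous.continuousOn ⟨fE_115_neg, fE_125_pos⟩
  -- transfer to F0
  have e1 : F0 1 = 0 := by rw [F0_eq, fE_one, zero_mul]
  have ez : F0 z = 0 := by rw [F0_eq, hz0, zero_mul]
  have e2 : F0 2 = 0 := by rw [F0_eq, fE_two, zero_mul]
  have ew : F0 w = 0 := by rw [F0_eq, hw0, zero_mul]
  have contF0 : ∀ a b : ℝ, ContinuousOn F0 (Icc a b) := fun a b x _ =>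
    (hasDerivAt_F0 x).continuousAt.continuousWithinAt
  have contF1 : ∀ a b : ℝ, ContinuousOn F1 (Icc a b) := fun a b x _ =>
    (hasDerivAt_F1 x).continuousAt.continuousWithinAt
  have h2w : (2:ℝ) < w := lt_trans (by norm_num) hwmem.1
  -- Rolle, three times on F0
  obtain ⟨q1, hq1, hq1z⟩ := exists_hasDerivAt_eq_zero hz1 (contF0 _ _)
    (e1.trans ez.symm) (fun x _ => hasDerivAt_F0 x)
  obtain ⟨q2, hq2, hq2z⟩ := exists_hasDerivAt_eq_zero hz2 (contF0 _ _)
    (ez.trans e2.symm) (fun x _ => hasDerivAt_F0 x)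
  obtain ⟨q3, hq3, hq3z⟩ := exists_hasDerivAt_eq_zero h2w (contF0 _ _)
    (e2.trans ew.symm) (fun x _ => hasDerivAt_F0 x)
  -- transfer to F1
  have f1 : F1 q1 = 0 := by rw [F1_eq, hq1z, zero_mul]
  have f2 : F1 q2 = 0 := by rw [F1_eq, hq2z, zero_mul]
  have f3 : F1 q3 = 0 := by rw [F1_eq, hq3z, zero_mul]
  have hq12 : q1 < q2 := lt_trans hq1.2 hq2.1
  have hq23 : q2 < q3 := lt_trans hq2.2 hq3.1
  -- Rolle, twice on F1
  obtain ⟨r1, hr1, hr1z⟩ := exists_hasDerivAt_eq_zero hq12 (contF1 _ _)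
    (f1.trans f2.symm) (fun x _ => hasDerivAt_F1 x)
  obtain ⟨r2, hr2, hr2z⟩ := exists_hasDerivAt_eq_zero hq23 (contF1 _ _)
    (f2.trans f3.symm) (fun x _ => hasDerivAt_F1 x)
  -- transfer to F2, contradiction with strict monotonicity
  have g1 : F2 r1 = 0 := by rw [F2_eq, hr1z, zero_mul]
  have g2 : F2 r2 = 0 := by rw [F2_eq, hr2z, zero_mul]
  have hr12 : r1 < r2 := lt_trans hr1.2 hr2.1
  have := F2_strictMono hr12
  rw [g1, g2] at this
  exact lt_irrefl 0 this

theorem stmt_0 :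
    (∀ H ∈ Ioo (1 / 2 : ℝ) 1, 0 < rhoHat H) ∧
    (∀ H ∈ Ioo (1 / 2 : ℝ) 1,
      rhoHat H = rho H 2 + (rho H 2) ^ 2 - (rho H 1) ^ 2 - rho H 1 * rho H 3) ∧
    rhoHat (1 / 2) = 0 ∧ rhoHat 1 = 0 := by
  refine ⟨?_, ?_, ?_, ?_⟩
  · intro H hH
    have ht : 2 * H ∈ Ioo (1:ℝ) 2 := ⟨by linarith [hH.1], by linarith [hH.2]⟩
    have hpos := fE_pos (2*H) ht
    have hrw : rhoHat H = (1/4) * fE (2*H) := rfl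
    rw [hrw]
    linarith
  · intro H hH
    have hne : 2 * H ≠ 0 := by
      have := hH.1
      positivity
    unfold rhoHat rho
    norm_num
    rw [Real.zero_rpow hne]
    have h9 : (9:ℝ)^(2*H) = 3^(2*H) * 3^(2*H) := by
      rw [← Real.mul_rpow (by norm_num) (by norm_num)]; norm_num
    have h8 : (8:ℝ)^(2*H) = 2^(2*H) * 4^(2*H) := by
      rw [← Real.mul_rpow (by norm_num) (by norm_num)]; norm_num
    have h6 : (6:ℝ)^(2*H) = 2^(2*H) * 3^(2*H) := by
      rw [← Real.mul_rpow (by norm_num) (by norm_num)]; norm_num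
    have h4 : (4:ℝ)^(2*H) = 2^(2*H) * 2^(2*H) := by
      rw [← Real.mul_rpow (by norm_num) (by norm_num)]; norm_num
    rw [h9, h8, h6, h4]
    ring
  · unfold rhoHat
    rw [show (2*(1/2:ℝ)) = (1:ℝ) by norm_num]
    rw [Real.rpow_one]
    norm_num
  · unfold rhoHat
    rw [show (2*(1:ℝ)) = ((2:ℕ):ℝ) by norm_num]
    rw [Real.rpow_natCast]
    norm_num
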